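/- Let $f:[0,\infty)\to[0,\infty)$ be monotone decreasing with $f(0)=1$, and let $X=\{x_k\}_{k\in\mathbb{N}}\subset\mathbb{R}^n$ be a separated set with $d_*(X)=\inf_{i\ne j}|x_i-x_j|>0$, whose linear span has dimension $d$. If $\int_0^\infty t^{d-1}f(t)\,dt<\infty$, then the Schoenberg matrix $\mathcal{S}_X(f)=\|f(|x_i-x_j|)\|_{i,j}$ defines a bounded self-adjoint operator $S_X(f)$ on $\ell^2(\mathbb{N})$ with $\|S_X(f)\| \le 1 + d^2 (5/d_*(X))^d \int_0^\infty t^{d-1} f(t)\,dt$. -/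

import Mathlib

open Set MeasureTheory Metric
open scoped ENNReal NNReal ComplexConjugate

/-- Cauchy–Schwarz for `ℝ≥0∞`-valued sums. -/
lemma schoen_CS (g h : ℕ → ℝ≥0∞) :
    (∑' j, g j * h j) ^ 2 ≤ (∑' j, g j ^ 2) * (∑' j, h j ^ 2) := by
  have hpq : Real.HolderConjugate 2 2 := Real.HolderConjugate.two_two
  have hCS := ENNReal.lintegral_mul_le_Lp_mul_Lq (Measure.count (α := ℕ)) hpq
      (measurable_of_countable g).aemeasurable (measurable_of_countable h).aemeasurable
  rw [lintegral_count, lintegral_count, lintegral_count] at hCS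
  have h2 : ∀ x : ℝ≥0∞, x ^ (2 : ℝ) = x ^ 2 := fun x => by
    rw [← ENNReal.rpow_natCast x 2]; norm_num
  simp only [Pi.mul_apply, h2] at hCS
  calc (∑' j, g j * h j) ^ 2
      ≤ ((∑' j, g j ^ 2) ^ (1/2 : ℝ) * (∑' j, h j ^ 2) ^ (1/2 : ℝ)) ^ 2 :=
        pow_le_pow_left' hCS 2
    _ = (∑' j, g j ^ 2) * (∑' j, h j ^ 2) := by
        rw [mul_pow, ← ENNReal.rpow_natCast ((∑' j, g j ^ 2) ^ (1/2 : ℝ)),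
          ← ENNReal.rpow_natCast ((∑' j, h j ^ 2) ^ (1/2 : ℝ)),
          ← ENNReal.rpow_mul, ← ENNReal.rpow_mul]
        norm_num

lemma schoen_shift (d : ℕ) {b c s : ℝ} (hb : 0 ≤ b) (hbc : b ≤ c) (hs : 0 ≤ s) :
    (b + s) ^ d - b ^ d ≤ (c + s) ^ d - c ^ d := by
  have key : ∀ x : ℝ, (x + s) ^ d - x ^ d
      = ∑ k ∈ Finset.range d, x ^ k * s ^ (d - k) * (d.choose k : ℝ) := by
    intro x
    rw [add_pow, Finset.sum_range_succ]
    simp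
  rw [key b, key c]
  apply Finset.sum_le_sum
  intro k _
  have h1 : b ^ k ≤ c ^ k := pow_le_pow_left₀ hb hbc k
  have h2 : (0:ℝ) ≤ s ^ (d - k) := pow_nonneg hs _
  have h3 : (0:ℝ) ≤ (d.choose k : ℝ) := Nat.cast_nonneg _
  apply mul_le_mul_of_nonneg_right _ h3
  exact mul_le_mul_of_nonneg_right h1 h2

lemma schoen_key (d : ℕ) {k : ℝ} (hk : 1 ≤ k) :
    (2*k+3)^d - (2*k-1)^d ≤ 5^d * (k^d - (k-1)^d) := by
  have h1 : (2*k+3)^d - (2*k-1)^d ≤ (5*k)^d - (5*k-4)^d := by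
    have := schoen_shift d (b := 2*k-1) (c := 5*k-4) (s := 4)
      (by linarith) (by linarith) (by norm_num)
    have e1 : 2*k-1+4 = 2*k+3 := by ring
    have e2 : 5*k-4+4 = 5*k := by ring
    rwa [e1, e2] at this
  have h2 : (5*k-5)^d ≤ (5*k-4)^d := pow_le_pow_left₀ (by linarith) (by linarith) d
  have h3 : (5*k)^d = 5^d * k^d := by rw [← mul_pow]
  have h4 : (5*k-5)^d = 5^d * (k-1)^d := by rw [← mul_pow]; ring_nf
  calc (2*k+3)^d - (2*k-1)^d ≤ (5*k)^d - (5*k-4)^d := h1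
    _ ≤ (5*k)^d - (5*k-5)^d := by linarith
    _ = 5^d * (k^d - (k-1)^d) := by rw [h3, h4]; ring


/-- Packing bound: δ-separated points in the annulus `kδ ≤ dist · c < (k+1)δ`
number at most `(2k+3)^d - (2k-1)^d`. -/
lemma schoen_pack {d : ℕ} (hd : 1 ≤ d) {δ : ℝ} (hδ : 0 < δ)
    (c : EuclideanSpace ℝ (Fin d)) (F : Finset ℕ) (y : ℕ → EuclideanSpace ℝ (Fin d))
    (hsep : ∀ i ∈ F, ∀ j ∈ F, i ≠ j → δ ≤ dist (y i) (y j))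
    (k : ℕ) (hk : 1 ≤ k) (hlo : ∀ i ∈ F, (k:ℝ) * δ ≤ dist (y i) c)
    (hhi : ∀ i ∈ F, dist (y i) c < ((k:ℝ)+1) * δ) :
    (F.card : ℝ) ≤ (2*(k:ℝ)+3)^d - (2*(k:ℝ)-1)^d := by
  haveI : Nonempty (Fin d) := ⟨⟨0, hd⟩⟩
  haveI : Nontrivial (EuclideanSpace ℝ (Fin d)) := inferInstance
  have hk1 : (1:ℝ) ≤ (k:ℝ) := by exact_mod_cast hk
  set R : ℝ := (2*(k:ℝ)+3) * (δ/2) with hR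
  set r : ℝ := (2*(k:ℝ)-1) * (δ/2) with hr
  have hr0 : 0 ≤ r := by rw [hr]; nlinarith
  have hR0 : 0 ≤ R := by rw [hR]; nlinarith
  have hrR : r ≤ R := by rw [hr, hR]; nlinarith
  set v : ℝ≥0∞ := volume (ball (0 : EuclideanSpace ℝ (Fin d)) 1) with hv
  have hv0 : v ≠ 0 := (measure_ball_pos volume _ one_pos).ne'
  have hvt : v ≠ ⊤ := measure_ball_lt_top.ne
  have hvol : ∀ (x : EuclideanSpace ℝ (Fin d)) (s : ℝ), 0 ≤ s →
      volume (ball x s) = ENNReal.ofReal (s ^ d) * v := by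
    intro x s hs
    rw [hv, Measure.addHaar_ball volume x hs, finrank_euclideanSpace_fin]
  have hdisj : (↑F : Set ℕ).PairwiseDisjoint (fun i => ball (y i) (δ/2)) := by
    intro i hi j hj hij
    exact ball_disjoint_ball (by have := hsep i hi j hj hij; linarith)
  have hsub : ∀ i ∈ F, ball (y i) (δ/2) ⊆ ball c R \ ball c r := by
    intro i hi z hz
    rw [mem_ball] at hz
    have h1 := hlo i hi
    have h2 := hhi i hi
    constructor
    · rw [mem_ball]
      calc dist z c ≤ dist z (y i) + dist (y i) c := dist_triangle _ _ _
        _ < δ/2 + ((k:ℝ)+1) * δ := by linarith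
        _ = R := by rw [hR]; ring
    · rw [mem_ball]
      intro hcon
      have : dist (y i) c ≤ dist (y i) z + dist z c := dist_triangle _ _ _
      rw [dist_comm (y i) z] at this
      have : dist (y i) c < δ/2 + r := by linarith
      rw [hr] at this
      nlinarith
  have hmain : (F.card : ℝ≥0∞) * (ENNReal.ofReal ((δ/2) ^ d) * v)
      ≤ ENNReal.ofReal (R ^ d - r ^ d) * v := by
    calc (F.card : ℝ≥0∞) * (ENNReal.ofReal ((δ/2) ^ d) * v)
        = ∑ i ∈ F, volume (ball (y i) (δ/2)) := by
          rw [Finset.sum_congr rfl (fun i _ => hvol (y i) (δ/2) (by positivity)),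
            Finset.sum_const, nsmul_eq_mul]
      _ = volume (⋃ i ∈ F, ball (y i) (δ/2)) :=
          (measure_biUnion_finset hdisj (fun i _ => measurableSet_ball)).symm
      _ ≤ volume (ball c R \ ball c r) := measure_mono (Set.iUnion₂_subset hsub)
      _ = volume (ball c R) - volume (ball c r) :=
          measure_diff (ball_subset_ball hrR) measurableSet_ball.nullMeasurableSet
            measure_ball_lt_top.ne
      _ = ENNReal.ofReal (R ^ d) * v - ENNReal.ofReal (r ^ d) * v := by
          rw [hvol c R hR0, hvol c r hr0]
      _ = (ENNReal.ofReal (R ^ d) - ENNReal.ofReal (r ^ d)) * v :=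
          (ENNReal.sub_mul (fun _ _ => hvt)).symm
      _ = ENNReal.ofReal (R ^ d - r ^ d) * v := by
          rw [ENNReal.ofReal_sub _ (pow_nonneg hr0 d)]
  have hmain2 : (F.card : ℝ≥0∞) * ENNReal.ofReal ((δ/2) ^ d)
      ≤ ENNReal.ofReal (R ^ d - r ^ d) := by
    rw [← mul_assoc] at hmain
    exact (ENNReal.mul_le_mul_iff_left hv0 hvt).mp hmain
  have hfac : R ^ d - r ^ d = ((2*(k:ℝ)+3)^d - (2*(k:ℝ)-1)^d) * (δ/2) ^ d := by
    rw [hR, hr, mul_pow, mul_pow]; ring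
  have hcoef : (0:ℝ) ≤ (2*(k:ℝ)+3)^d - (2*(k:ℝ)-1)^d := by
    have h1 := pow_le_pow_left₀ (show (0:ℝ) ≤ 2*(k:ℝ)-1 by linarith)
      (show 2*(k:ℝ)-1 ≤ 2*(k:ℝ)+3 by linarith) d
    linarith
  rw [hfac, ENNReal.ofReal_mul hcoef] at hmain2
  have hpow0 : ENNReal.ofReal ((δ/2) ^ d) ≠ 0 := by
    simp only [ne_eq, ENNReal.ofReal_eq_zero, not_le]
    positivity
  have hfinal : (F.card : ℝ≥0∞) ≤ ENNReal.ofReal ((2*(k:ℝ)+3)^d - (2*(k:ℝ)-1)^d) :=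
    (ENNReal.mul_le_mul_iff_left hpow0 ENNReal.ofReal_ne_top).mp hmain2
  have := ENNReal.toReal_mono ENNReal.ofReal_ne_top hfinal
  rwa [ENNReal.toReal_natCast, ENNReal.toReal_ofReal hcoef] at this

lemma schoen_sum_Icc (g : ℕ → ℝ) (K : ℕ) :
    ∑ k ∈ Finset.Icc 1 K, g k = ∑ m ∈ Finset.range K, g (m+1) := by
  induction K with
  | zero => simp
  | succ K ih => rw [Finset.sum_Icc_succ_top (by omega), ih, Finset.sum_range_succ]

/-- Slice comparison: `(k^d - (k-1)^d) f(kδ) ≤ (d/δ^d) ∫_{(k-1)δ}^{kδ} t^{d-1} f t`. -/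
lemma schoen_slice {f : ℝ → ℝ} (hpos : ∀ t, 0 ≤ t → 0 ≤ f t)
    (hmono : AntitoneOn f (Set.Ici (0 : ℝ))) {d : ℕ} (hd : 1 ≤ d)
    {δ : ℝ} (hδ : 0 < δ) (hint : IntegrableOn (fun t : ℝ => t ^ (d - 1) * f t) (Set.Ioi 0))
    (k : ℕ) (hk : 1 ≤ k) :
    ((k:ℝ)^d - ((k:ℝ)-1)^d) * f ((k:ℝ)*δ)
      ≤ ((d:ℝ) / δ^d) * ∫ t in Set.Ioc (((k:ℝ)-1)*δ) ((k:ℝ)*δ), t ^ (d-1) * f t := by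
  have hk1 : (1:ℝ) ≤ (k:ℝ) := by exact_mod_cast hk
  set a : ℝ := ((k:ℝ)-1)*δ with ha
  set b : ℝ := (k:ℝ)*δ with hb
  have ha0 : 0 ≤ a := by rw [ha]; nlinarith
  have hab : a ≤ b := by rw [ha, hb]; nlinarith
  have hb0 : 0 ≤ b := le_trans ha0 hab
  have hfb : 0 ≤ f b := hpos b hb0
  have hint1 : IntegrableOn (fun t : ℝ => t ^ (d-1) * f b) (Set.Ioc a b) :=
    ((continuous_pow (d-1)).mul continuous_const).integrableOn_Ioc
  have hint2 : IntegrableOn (fun t : ℝ => t ^ (d-1) * f t) (Set.Ioc a b) := by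
    apply hint.mono_set
    intro t ht
    exact lt_of_le_of_lt ha0 ht.1
  have hcomp : ∫ t in Set.Ioc a b, t ^ (d-1) * f b ≤ ∫ t in Set.Ioc a b, t ^ (d-1) * f t := by
    apply setIntegral_mono_on hint1 hint2 measurableSet_Ioc
    intro t ht
    have ht0 : 0 ≤ t := le_trans ha0 ht.1.le
    exact mul_le_mul_of_nonneg_left (hmono (mem_Ici.mpr ht0) (mem_Ici.mpr hb0) ht.2)
      (pow_nonneg ht0 _)
  have hd1 : d - 1 + 1 = d := Nat.succ_pred_eq_of_pos hd
  have hcast : ((d-1:ℕ):ℝ) + 1 = (d:ℝ) := by exact_mod_cast congrArg (Nat.cast : ℕ → ℝ) hd1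
  have hcalc : ∫ t in Set.Ioc a b, t ^ (d-1) * f b = ((b^d - a^d)/(d:ℝ)) * f b := by
    rw [← intervalIntegral.integral_of_le hab, intervalIntegral.integral_mul_const,
      integral_pow, hd1, hcast]
  have hbd : b^d = (k:ℝ)^d * δ^d := by rw [hb, mul_pow]
  have had : a^d = ((k:ℝ)-1)^d * δ^d := by rw [ha, mul_pow]
  have hδd : (0:ℝ) < δ^d := pow_pos hδ d
  have hdpos : (0:ℝ) < (d:ℝ) := by exact_mod_cast hd
  calc ((k:ℝ)^d - ((k:ℝ)-1)^d) * f b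
      = ((d:ℝ)/δ^d) * (((b^d - a^d)/(d:ℝ)) * f b) := by
        rw [hbd, had]; field_simp
    _ ≤ ((d:ℝ)/δ^d) * ∫ t in Set.Ioc a b, t ^ (d-1) * f t := by
        apply mul_le_mul_of_nonneg_left _ (by positivity)
        rw [← hcalc]; exact hcomp
  -- note: last `rw` trick
/-- Chaining adjacent slices. -/
lemma schoen_chain {f : ℝ → ℝ} {d : ℕ}
    {δ : ℝ} (hδ : 0 < δ) (hint : IntegrableOn (fun t : ℝ => t ^ (d-1) * f t) (Set.Ioi 0))
    (K : ℕ) :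
    ∑ k ∈ Finset.Icc 1 K, ∫ t in Set.Ioc (((k:ℝ)-1)*δ) ((k:ℝ)*δ), t^(d-1) * f t
      = ∫ t in Set.Ioc 0 ((K:ℝ)*δ), t^(d-1) * f t := by
  have hInt : ∀ m : ℕ, IntervalIntegrable (fun t : ℝ => t^(d-1) * f t) volume
      ((m:ℝ)*δ) (((m:ℝ)+1)*δ) := by
    intro m
    have hm0 : (0:ℝ) ≤ (m:ℝ) := Nat.cast_nonneg m
    rw [intervalIntegrable_iff_integrableOn_Ioc_of_le (by nlinarith)]
    apply hint.mono_set
    intro t ht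
    exact lt_of_le_of_lt (by positivity) ht.1
  rw [schoen_sum_Icc]
  have hmain := intervalIntegral.sum_integral_adjacent_intervals
    (a := fun m : ℕ => (m:ℝ)*δ) (n := K) (f := fun t : ℝ => t^(d-1) * f t)
    (μ := volume) (fun m _ => by
      show IntervalIntegrable _ volume ((m:ℝ)*δ) (((m+1:ℕ):ℝ)*δ)
      have e2 : ((m+1:ℕ):ℝ)*δ = ((m:ℝ)+1)*δ := by push_cast; ring
      rw [e2]; exact hInt m)
  have h1 : ∀ m ∈ Finset.range K,
      (∫ t in Set.Ioc ((((m+1:ℕ):ℝ)-1) * δ) (((m+1:ℕ):ℝ) * δ), t^(d-1) * f t)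
    = ∫ t in ((fun m : ℕ => (m:ℝ)*δ) m)..((fun m : ℕ => (m:ℝ)*δ) (m+1)), t^(d-1) * f t := by
    intro m _
    show _ = ∫ t in ((m:ℝ)*δ)..(((m+1:ℕ):ℝ)*δ), t^(d-1) * f t
    have hle : (m:ℝ)*δ ≤ ((m+1:ℕ):ℝ)*δ := by
      push_cast
      nlinarith [Nat.cast_nonneg (α := ℝ) m, hδ.le]
    rw [intervalIntegral.integral_of_le hle]
    have e1 : (((m+1:ℕ):ℝ)-1)*δ = (m:ℝ)*δ := by push_cast; ring
    rw [e1]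
  rw [Finset.sum_congr rfl h1, hmain]
  show (∫ t in ((0:ℕ):ℝ)*δ..((K:ℕ):ℝ)*δ, t^(d-1) * f t) = _
  rw [intervalIntegral.integral_of_le (by have : (0:ℝ) ≤ (K:ℝ) := Nat.cast_nonneg K; push_cast; nlinarith : ((0:ℕ):ℝ)*δ ≤ ((K:ℕ):ℝ)*δ)]
  norm_num

/-- Schur test: a symmetric nonnegative matrix with uniformly bounded row sums
defines a bounded self-adjoint operator on `ℓ²`. -/
lemma schoen_schur (A : ℕ → ℕ → ℝ) (hsymm : ∀ i j, A i j = A j i) (hA : ∀ i j, 0 ≤ A i j)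
    (M : ℝ) (hrow : ∀ i, ∀ F : Finset ℕ, ∑ j ∈ F, A i j ≤ M) :
    ∃ T : lp (fun _ : ℕ => ℝ) 2 →L[ℝ] lp (fun _ : ℕ => ℝ) 2,
      IsSelfAdjoint T ∧ (∀ (x : lp (fun _ : ℕ => ℝ) 2) (i : ℕ), T x i = ∑' j, A i j * x j)
        ∧ ‖T‖ ≤ M := by
  classical
  have hM0 : 0 ≤ M := by simpa using hrow 0 ∅
  have hrowS : ∀ i, Summable (A i) := fun i => summable_of_sum_le (fun j => hA i j) (hrow i)
  have htrow : ∀ i, ∑' j, A i j ≤ M := fun i => Summable.tsum_le_of_sum_le (hrowS i) (hrow i)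
  set M' : ℝ≥0∞ := ENNReal.ofReal M with hM'
  set a : ℕ → ℕ → ℝ≥0∞ := fun i j => ENNReal.ofReal (A i j) with ha
  have harow : ∀ i, ∑' j, a i j ≤ M' := by
    intro i
    rw [show (fun j => a i j) = fun j => ENNReal.ofReal (A i j) from rfl,
      ← ENNReal.ofReal_tsum_of_nonneg (fun j => hA i j) (hrowS i)]
    exact ENNReal.ofReal_le_ofReal (htrow i)
  have hacol : ∀ j, ∑' i, a i j ≤ M' := by
    intro j
    have he : (fun i => a i j) = (fun i => a j i) := by
      funext i; simp only [ha, hsymm i j]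
    rw [he]; exact harow j
  have hg : ∀ z : ℝ≥0∞, (z ^ (1/2:ℝ))^2 = z := fun z => by
    rw [← ENNReal.rpow_natCast (z ^ (1/2:ℝ)) 2, ← ENNReal.rpow_mul]; norm_num
  have hkey : ∀ (i : ℕ) (u : ℕ → ℝ≥0∞),
      (∑' j, a i j * u j)^2 ≤ M' * ∑' j, a i j * (u j)^2 := by
    intro i u
    calc (∑' j, a i j * u j)^2
        = (∑' j, (a i j ^ (1/2:ℝ)) * (a i j ^ (1/2:ℝ) * u j))^2 := by
          congr 1
          refine tsum_congr (fun j => ?_)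
          rw [← mul_assoc, ← sq, hg]
      _ ≤ (∑' j, ((a i j ^ (1/2:ℝ)))^2) * (∑' j, (a i j ^ (1/2:ℝ) * u j)^2) := schoen_CS _ _
      _ = (∑' j, a i j) * (∑' j, a i j * (u j)^2) := by
          congr 1
          · exact tsum_congr (fun j => hg _)
          · refine tsum_congr (fun j => ?_)
            rw [mul_pow, hg]
      _ ≤ M' * ∑' j, a i j * (u j)^2 := mul_le_mul_left (harow i) _
  have hmainE : ∀ u : ℕ → ℝ≥0∞, (∑' i, (∑' j, a i j * u j)^2) ≤ M'^2 * ∑' j, (u j)^2 := by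
    intro u
    calc ∑' i, (∑' j, a i j * u j)^2
        ≤ ∑' i, M' * ∑' j, a i j * (u j)^2 := ENNReal.tsum_le_tsum (fun i => hkey i u)
      _ = M' * ∑' i, ∑' j, a i j * (u j)^2 := ENNReal.tsum_mul_left
      _ = M' * ∑' j, ∑' i, a i j * (u j)^2 := by rw [ENNReal.tsum_comm]
      _ = M' * ∑' j, (∑' i, a i j) * (u j)^2 := by
          congr 1
          exact tsum_congr (fun j => ENNReal.tsum_mul_right)
      _ ≤ M' * ∑' j, M' * (u j)^2 := by
          exact mul_le_mul_right (ENNReal.tsum_le_tsum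
            (fun j => mul_le_mul_left (hacol j) _)) _
      _ = M'^2 * ∑' j, (u j)^2 := by rw [ENNReal.tsum_mul_left, ← mul_assoc, sq]
  -- lp facts
  have hsq_eq : ∀ r : ℝ, r ^ ((2:ℝ≥0∞).toReal) = r ^ (2:ℕ) := by
    intro r
    rw [ENNReal.toReal_ofNat, show (2:ℝ) = ((2:ℕ):ℝ) by norm_num, Real.rpow_natCast]
  have htwo : (0:ℝ) < (2:ℝ≥0∞).toReal := by rw [ENNReal.toReal_ofNat]; norm_num
  have hxs2 : ∀ x : lp (fun _ : ℕ => ℝ) 2, Summable (fun j => ‖x j‖^(2:ℕ)) := by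
    intro x
    have := (memℓp_gen_iff htwo).mp (lp.memℓp x)
    exact this.congr (fun j => hsq_eq _)
  have hnorm2 : ∀ x : lp (fun _ : ℕ => ℝ) 2, ‖x‖^(2:ℕ) = ∑' j, ‖x j‖^(2:ℕ) := by
    intro x
    have h := lp.norm_rpow_eq_tsum htwo x
    rw [hsq_eq] at h
    rw [h]
    exact tsum_congr (fun j => hsq_eq _)
  have husq : ∀ x : lp (fun _ : ℕ => ℝ) 2,
      ∑' j, (ENNReal.ofReal ‖x j‖)^2 = ENNReal.ofReal (‖x‖^(2:ℕ)) := by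
    intro x
    rw [hnorm2 x, ENNReal.ofReal_tsum_of_nonneg (fun j => by positivity) (hxs2 x)]
    exact tsum_congr (fun j => (ENNReal.ofReal_pow (norm_nonneg _) 2).symm)
  have hxnsum : ∀ (x : lp (fun _ : ℕ => ℝ) 2) (i : ℕ), Summable (fun j => A i j * ‖x j‖) :=
    fun x i => Summable.of_nonneg_of_le (fun j => mul_nonneg (hA i j) (norm_nonneg _))
      (fun j => mul_le_mul_of_nonneg_left
        (lp.norm_apply_le_norm (by norm_num) x j) (hA i j))
      ((hrowS i).mul_right ‖x‖)
  have hnsum : ∀ (x : lp (fun _ : ℕ => ℝ) 2) (i : ℕ), Summable (fun j => ‖A i j * x j‖) :=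
    fun x i => (hxnsum x i).congr
      (fun j => by rw [norm_mul, Real.norm_of_nonneg (hA i j)])
  have hxsummable : ∀ (x : lp (fun _ : ℕ => ℝ) 2) (i : ℕ), Summable (fun j => A i j * x j) :=
    fun x i => (hnsum x i).of_norm
  set Tf : lp (fun _ : ℕ => ℝ) 2 → ℕ → ℝ := fun x i => ∑' j, A i j * x j with hTf
  have hbridge : ∀ (x : lp (fun _ : ℕ => ℝ) 2) (i : ℕ),
      ENNReal.ofReal ‖Tf x i‖ ≤ ∑' j, a i j * ENNReal.ofReal ‖x j‖ := by
    intro x i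
    have h1 : ‖Tf x i‖ ≤ ∑' j, A i j * ‖x j‖ := by
      calc ‖Tf x i‖ ≤ ∑' j, ‖A i j * x j‖ := norm_tsum_le_tsum_norm (hnsum x i)
        _ = ∑' j, A i j * ‖x j‖ := tsum_congr
            (fun j => by rw [norm_mul, Real.norm_of_nonneg (hA i j)])
    calc ENNReal.ofReal ‖Tf x i‖ ≤ ENNReal.ofReal (∑' j, A i j * ‖x j‖) :=
          ENNReal.ofReal_le_ofReal h1
      _ = ∑' j, a i j * ENNReal.ofReal ‖x j‖ := by
          rw [ENNReal.ofReal_tsum_of_nonneg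
            (fun j => mul_nonneg (hA i j) (norm_nonneg _)) (hxnsum x i)]
          exact tsum_congr (fun j => ENNReal.ofReal_mul (hA i j))
  have hTxE : ∀ x : lp (fun _ : ℕ => ℝ) 2,
      ∑' i, ENNReal.ofReal (‖Tf x i‖^(2:ℕ)) ≤ ENNReal.ofReal ((M * ‖x‖)^(2:ℕ)) := by
    intro x
    calc ∑' i, ENNReal.ofReal (‖Tf x i‖^(2:ℕ))
        = ∑' i, (ENNReal.ofReal ‖Tf x i‖)^2 :=
          tsum_congr (fun i => ENNReal.ofReal_pow (norm_nonneg _) 2)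
      _ ≤ ∑' i, (∑' j, a i j * ENNReal.ofReal ‖x j‖)^2 :=
          ENNReal.tsum_le_tsum (fun i => pow_le_pow_left' (hbridge x i) 2)
      _ ≤ M'^2 * ∑' j, (ENNReal.ofReal ‖x j‖)^2 := hmainE _
      _ = M'^2 * ENNReal.ofReal (‖x‖^(2:ℕ)) := by rw [husq x]
      _ = ENNReal.ofReal ((M * ‖x‖)^(2:ℕ)) := by
          rw [hM', ← ENNReal.ofReal_pow hM0, ← ENNReal.ofReal_mul (by positivity), mul_pow]
  have hTsum2 : ∀ x : lp (fun _ : ℕ => ℝ) 2, Summable (fun i => ‖Tf x i‖^(2:ℕ)) := by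
    intro x
    have hne : (∑' i, ENNReal.ofReal (‖Tf x i‖^(2:ℕ))) ≠ ⊤ :=
      (lt_of_le_of_lt (hTxE x) ENNReal.ofReal_lt_top).ne
    exact (ENNReal.summable_toReal hne).congr
      (fun i => ENNReal.toReal_ofReal (by positivity))
  have hTmem : ∀ x : lp (fun _ : ℕ => ℝ) 2, Memℓp (Tf x) 2 := by
    intro x
    rw [memℓp_gen_iff htwo]
    exact (hTsum2 x).congr (fun i => (hsq_eq _).symm)
  have hTle : ∀ x : lp (fun _ : ℕ => ℝ) 2, ∑' i, ‖Tf x i‖^(2:ℕ) ≤ (M * ‖x‖)^(2:ℕ) := by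
    intro x
    have h1 : ENNReal.ofReal (∑' i, ‖Tf x i‖^(2:ℕ)) = ∑' i, ENNReal.ofReal (‖Tf x i‖^(2:ℕ)) :=
      ENNReal.ofReal_tsum_of_nonneg (fun i => by positivity) (hTsum2 x)
    have h3 := ENNReal.toReal_mono ENNReal.ofReal_ne_top (le_trans h1.le (hTxE x))
    rwa [ENNReal.toReal_ofReal (tsum_nonneg (fun i => by positivity)),
      ENNReal.toReal_ofReal (by positivity)] at h3
  set L : lp (fun _ : ℕ => ℝ) 2 →ₗ[ℝ] lp (fun _ : ℕ => ℝ) 2 :=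
    { toFun := fun x => ⟨Tf x, hTmem x⟩
      map_add' := by
        intro x y
        apply lp.ext
        funext i
        show Tf (x + y) i = Tf x i + Tf y i
        rw [hTf]
        simp only
        rw [← Summable.tsum_add (hxsummable x i) (hxsummable y i)]
        refine tsum_congr (fun j => ?_)
        have hc : (x + y : lp (fun _ : ℕ => ℝ) 2) j = x j + y j := by
          rw [lp.coeFn_add]; rfl
        rw [hc]; ring
      map_smul' := by
        intro c x
        apply lp.ext
        funext i
        show Tf (c • x) i = c * Tf x i
        rw [hTf]
        simp only
        rw [← tsum_mul_left]
        refine tsum_congr (fun j => ?_)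
        have hc : (c • x : lp (fun _ : ℕ => ℝ) 2) j = c * x j := by
          rw [lp.coeFn_smul]; rfl
        rw [hc]; ring } with hL
  have hbound : ∀ x, ‖L x‖ ≤ M * ‖x‖ := by
    intro x
    have h2 : ‖L x‖^(2:ℕ) = ∑' i, ‖Tf x i‖^(2:ℕ) := hnorm2 (L x)
    have h3 : ‖L x‖^(2:ℕ) ≤ (M * ‖x‖)^(2:ℕ) := by rw [h2]; exact hTle x
    calc ‖L x‖ = Real.sqrt (‖L x‖^(2:ℕ)) := (Real.sqrt_sq (norm_nonneg _)).symm
      _ ≤ Real.sqrt ((M*‖x‖)^(2:ℕ)) := Real.sqrt_le_sqrt h3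
      _ = M * ‖x‖ := Real.sqrt_sq (by positivity)
  set T := L.mkContinuous M hbound with hT
  have happ : ∀ (x : lp (fun _ : ℕ => ℝ) 2) (i : ℕ), T x i = ∑' j, A i j * x j :=
    fun x i => rfl
  -- product summability
  have hprodE : ∀ x y : lp (fun _ : ℕ => ℝ) 2,
      (∑' (p : ℕ × ℕ), ENNReal.ofReal ‖A p.1 p.2 * x p.2 * y p.1‖) ≠ ⊤ := by
    intro x y
    have heq : ∀ p : ℕ × ℕ, ENNReal.ofReal ‖A p.1 p.2 * x p.2 * y p.1‖
        = ENNReal.ofReal ‖y p.1‖ * (a p.1 p.2 * ENNReal.ofReal ‖x p.2‖) := by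
      intro p
      rw [norm_mul, norm_mul, Real.norm_of_nonneg (hA _ _),
        ENNReal.ofReal_mul (mul_nonneg (hA _ _) (norm_nonneg _)),
        ENNReal.ofReal_mul (hA _ _)]
      ring
    have hrw : (∑' (p : ℕ × ℕ), ENNReal.ofReal ‖A p.1 p.2 * x p.2 * y p.1‖)
        = ∑' i, ENNReal.ofReal ‖y i‖ * (∑' j, a i j * ENNReal.ofReal ‖x j‖) := by
      rw [tsum_congr heq]
      rw [ENNReal.tsum_prod
        (f := fun i j => ENNReal.ofReal ‖y i‖ * (a i j * ENNReal.ofReal ‖x j‖))]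
      exact tsum_congr (fun i => ENNReal.tsum_mul_left)
    rw [hrw]
    intro htop
    have hCS := schoen_CS (fun i => ENNReal.ofReal ‖y i‖)
      (fun i => ∑' j, a i j * ENNReal.ofReal ‖x j‖)
    rw [htop] at hCS
    have hfin : (∑' i, (ENNReal.ofReal ‖y i‖)^2)
        * (∑' i, (∑' j, a i j * ENNReal.ofReal ‖x j‖)^2) < ⊤ := by
      apply ENNReal.mul_lt_top
      · rw [husq y]; exact ENNReal.ofReal_lt_top
      · refine lt_of_le_of_lt (hmainE _) ?_
        apply ENNReal.mul_lt_top
        · exact ENNReal.pow_lt_top ENNReal.ofReal_lt_top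
        · rw [husq x]; exact ENNReal.ofReal_lt_top
    rw [ENNReal.top_pow (by norm_num)] at hCS
    exact absurd (lt_of_le_of_lt hCS hfin) (lt_irrefl ⊤)
  have hP : ∀ x y : lp (fun _ : ℕ => ℝ) 2,
      Summable (fun p : ℕ × ℕ => A p.1 p.2 * x p.2 * y p.1) := by
    intro x y
    apply Summable.of_nnnorm
    apply ENNReal.tsum_coe_ne_top_iff_summable.mp
    have : ∀ p : ℕ × ℕ, ((‖A p.1 p.2 * x p.2 * y p.1‖₊ : ℝ≥0) : ℝ≥0∞)
        = ENNReal.ofReal ‖A p.1 p.2 * x p.2 * y p.1‖ :=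
      fun p => (ofReal_norm _).symm
    rw [tsum_congr this]
    exact hprodE x y
  have hsym : ∀ x y : lp (fun _ : ℕ => ℝ) 2, (inner ℝ (T x) y : ℝ) = inner ℝ x (T y) := by
    intro x y
    rw [lp.inner_eq_tsum, lp.inner_eq_tsum]
    simp only [RCLike.inner_apply, conj_trivial]
    have hL1 : ∀ i, conj ((T x) i) * y i = ∑' j, A i j * x j * y i := by
      intro i
      rw [happ x i]
      simp only [conj_trivial]
      exact (tsum_mul_right).symm
    have hR1 : ∀ j, conj (x j) * (T y) j = ∑' i, A i j * x j * y i := by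
      intro j
      rw [happ y j]
      simp only [conj_trivial]
      rw [← tsum_mul_left]
      refine tsum_congr (fun i => ?_)
      rw [hsymm i j]; ring
    rw [show (∑' i, y i * (T x) i) = ∑' i, conj ((T x) i) * y i from
        tsum_congr (fun i => by rw [conj_trivial, mul_comm]),
      show (∑' i, (T y) i * x i) = ∑' j, conj (x j) * (T y) j from
        tsum_congr (fun i => by rw [conj_trivial, mul_comm])]
    calc ∑' i, conj ((T x) i) * y i = ∑' i, ∑' j, A i j * x j * y i := tsum_congr hL1
      _ = ∑' j, ∑' i, A i j * x j * y i := (Summable.tsum_comm (f := fun i j => A i j * x j * y i) (by exact hP x y)).symm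
      _ = ∑' j, conj (x j) * (T y) j := tsum_congr (fun j => (hR1 j).symm)
  refine ⟨T, ?_, happ, L.mkContinuous_norm_le hM0 hbound⟩
  rw [ContinuousLinearMap.isSelfAdjoint_iff_isSymmetric]
  intro x y
  exact hsym x y


/-- Boundedness of the Schoenberg operator: if `f` is nonnegative monotone decreasing with
`f 0 = 1`, `X` is separated with linear span of dimension `d`, and `t^{d-1} f ∈ L¹(ℝ₊)`,
then the Schoenberg matrix `‖f(|x_i - x_j|)‖` defines a bounded self-adjoint operator on `ℓ²`
with `‖S_X(f)‖ ≤ 1 + d² (5/d_*(X))^d ∫_0^∞ t^{d-1} f(t) dt`. -/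
theorem schoenberg_bounded (n : ℕ) (f : ℝ → ℝ) (hpos : ∀ t, 0 ≤ t → 0 ≤ f t)
    (hmono : AntitoneOn f (Set.Ici (0 : ℝ))) (hf0 : f 0 = 1)
    (X : ℕ → EuclideanSpace ℝ (Fin n)) (hinj : Function.Injective X)
    (hsep : 0 < sInf {r : ℝ | ∃ i j : ℕ, i ≠ j ∧ r = dist (X i) (X j)})
    (d : ℕ) (hd : Module.finrank ℝ (Submodule.span ℝ (Set.range X)) = d)
    (hint : IntegrableOn (fun t : ℝ => t ^ (d - 1) * f t) (Set.Ioi 0)) :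
    ∃ T : lp (fun _ : ℕ => ℝ) 2 →L[ℝ] lp (fun _ : ℕ => ℝ) 2,
      IsSelfAdjoint T ∧
      (∀ i j : ℕ, inner ℝ (T (lp.single 2 i (1 : ℝ))) (lp.single 2 j (1 : ℝ)) =
        f (dist (X i) (X j))) ∧
      ‖T‖ ≤ 1 + (d : ℝ) ^ 2 *
          (5 / sInf {r : ℝ | ∃ i j : ℕ, i ≠ j ∧ r = dist (X i) (X j)}) ^ d *
          ∫ t in Set.Ioi (0 : ℝ), t ^ (d - 1) * f t := by
  classical
  set δ := sInf {r : ℝ | ∃ i j : ℕ, i ≠ j ∧ r = dist (X i) (X j)} with hδdef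
  have hbdd : BddBelow {r : ℝ | ∃ i j : ℕ, i ≠ j ∧ r = dist (X i) (X j)} := by
    refine ⟨0, fun r hr => ?_⟩
    obtain ⟨i, j, -, rfl⟩ := hr
    exact dist_nonneg
  have hδpos : 0 < δ := hsep
  have hsepd : ∀ i j : ℕ, i ≠ j → δ ≤ dist (X i) (X j) := fun i j h =>
    csInf_le hbdd ⟨i, j, h, rfl⟩
  subst hd
  set V := Submodule.span ℝ (Set.range X) with hV
  set d := Module.finrank ℝ V with hdd
  have hd1 : 1 ≤ d := by
    by_contra hcon
    push_neg at hcon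
    have h0 : Module.finrank ℝ V = 0 := by omega
    have hsub : Subsingleton V := Module.finrank_zero_iff.mp h0
    have hX01 : X 0 = X 1 := by
      have e0 : (⟨X 0, Submodule.subset_span ⟨0, rfl⟩⟩ : V)
          = ⟨X 1, Submodule.subset_span ⟨1, rfl⟩⟩ := Subsingleton.elim _ _
      exact congrArg Subtype.val e0
    exact absurd (hinj hX01) (by norm_num)
  set e := (stdOrthonormalBasis ℝ V).repr with he
  set Y : ℕ → V := fun j => ⟨X j, Submodule.subset_span ⟨j, rfl⟩⟩ with hY
  set y : ℕ → EuclideanSpace ℝ (Fin d) := fun j => e (Y j) with hy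
  have hdist : ∀ a b : ℕ, dist (y a) (y b) = dist (X a) (X b) := by
    intro a b
    rw [hy]
    simp only
    rw [e.dist_map]
    exact Subtype.dist_eq (Y a) (Y b)
  set I := ∫ t in Set.Ioi (0:ℝ), t ^ (d - 1) * f t with hI
  have hI0 : 0 ≤ I := setIntegral_nonneg measurableSet_Ioi
    (fun t ht => mul_nonneg (pow_nonneg (le_of_lt ht) _) (hpos t (le_of_lt ht)))
  have hIK : ∀ K : ℕ, ∫ t in Set.Ioc 0 ((K:ℝ)*δ), t^(d-1) * f t ≤ I := by
    intro K
    rw [hI]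
    apply setIntegral_mono_set hint
    · exact (ae_restrict_iff' measurableSet_Ioi).mpr (ae_of_all _
        (fun t ht => mul_nonneg (pow_nonneg ht.le _) (hpos t ht.le)))
    · exact (Set.Ioc_subset_Ioi_self).eventuallyLE
  -- off-diagonal row sums
  have hoff : ∀ (i : ℕ) (G : Finset ℕ), (∀ j ∈ G, j ≠ i) →
      ∑ j ∈ G, f (dist (X i) (X j)) ≤ (d:ℝ) * (5/δ)^d * I := by
    intro i G hG
    set κ : ℕ → ℕ := fun j => ⌊dist (X i) (X j) / δ⌋₊ with hκ
    have hκprop : ∀ j ∈ G, 1 ≤ κ j ∧ ((κ j:ℝ)*δ ≤ dist (X i) (X j))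
        ∧ dist (X i) (X j) < ((κ j:ℝ)+1)*δ := by
      intro j hj
      have hne : i ≠ j := fun h => (hG j hj) h.symm
      have hd1' : δ ≤ dist (X i) (X j) := hsepd i j hne
      have hdp : 0 ≤ dist (X i) (X j) / δ := by positivity
      refine ⟨?_, ?_, ?_⟩
      · exact Nat.le_floor (by rw [Nat.cast_one, le_div_iff₀ hδpos]; linarith)
      · calc ((κ j:ℝ))*δ ≤ (dist (X i) (X j)/δ)*δ :=
              mul_le_mul_of_nonneg_right (Nat.floor_le hdp) hδpos.le
          _ = dist (X i) (X j) := by field_simp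
      · calc dist (X i) (X j) = (dist (X i) (X j)/δ)*δ := by field_simp
          _ < ((κ j:ℝ)+1)*δ :=
              mul_lt_mul_of_pos_right (Nat.lt_floor_add_one _) hδpos
    set K := G.sup κ with hK
    have hmaps : ∀ j ∈ G, κ j ∈ Finset.Icc 1 K := fun j hj =>
      Finset.mem_Icc.mpr ⟨(hκprop j hj).1, Finset.le_sup hj⟩
    have h1 : ∑ j ∈ G, f (dist (X i) (X j)) ≤ ∑ j ∈ G, f ((κ j:ℝ)*δ) := by
      apply Finset.sum_le_sum
      intro j hj
      exact hmono (mem_Ici.mpr (by positivity)) (mem_Ici.mpr dist_nonneg) (hκprop j hj).2.1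
    have hcount : ∀ k ∈ Finset.Icc 1 K, ((G.filter (fun j => κ j = k)).card : ℝ)
        ≤ (2*(k:ℝ)+3)^d - (2*(k:ℝ)-1)^d := by
      intro k hk
      obtain ⟨hk1, -⟩ := Finset.mem_Icc.mp hk
      apply schoen_pack hd1 hδpos (y i) _ y ?_ k hk1 ?_ ?_
      · intro a ha b hb hab
        rw [hdist a b]
        exact hsepd a b hab
      · intro j hj
        obtain ⟨hj1, hj2⟩ := Finset.mem_filter.mp hj
        rw [hdist j i, dist_comm (X j) (X i)]
        have h := (hκprop j hj1).2.1
        rwa [hj2] at h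
      · intro j hj
        obtain ⟨hj1, hj2⟩ := Finset.mem_filter.mp hj
        rw [hdist j i, dist_comm (X j) (X i)]
        have h := (hκprop j hj1).2.2
        rwa [hj2] at h
    have hfk : ∀ k : ℕ, 0 ≤ f ((k:ℝ)*δ) := fun k => hpos _ (by positivity)
    have h2 : ∑ j ∈ G, f ((κ j:ℝ)*δ)
        = ∑ k ∈ Finset.Icc 1 K, ∑ j ∈ G.filter (fun j => κ j = k), f ((κ j:ℝ)*δ) :=
      (Finset.sum_fiberwise_of_maps_to hmaps _).symm
    have h3 : ∀ k ∈ Finset.Icc 1 K, ∑ j ∈ G.filter (fun j => κ j = k), f ((κ j:ℝ)*δ)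
        = ((G.filter (fun j => κ j = k)).card : ℝ) * f ((k:ℝ)*δ) := by
      intro k hk
      rw [Finset.sum_congr rfl (fun j hj => by rw [(Finset.mem_filter.mp hj).2]),
        Finset.sum_const, nsmul_eq_mul]
    have h4 : ∀ k ∈ Finset.Icc 1 K, ((G.filter (fun j => κ j = k)).card : ℝ) * f ((k:ℝ)*δ)
        ≤ (5^d * ((d:ℝ)/δ^d)) * ∫ t in Set.Ioc (((k:ℝ)-1)*δ) ((k:ℝ)*δ), t^(d-1) * f t := by
      intro k hk
      obtain ⟨hk1, -⟩ := Finset.mem_Icc.mp hk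
      have hk1' : (1:ℝ) ≤ (k:ℝ) := by exact_mod_cast hk1
      calc ((G.filter (fun j => κ j = k)).card : ℝ) * f ((k:ℝ)*δ)
          ≤ ((2*(k:ℝ)+3)^d - (2*(k:ℝ)-1)^d) * f ((k:ℝ)*δ) :=
            mul_le_mul_of_nonneg_right (hcount k hk) (hfk k)
        _ ≤ (5^d * ((k:ℝ)^d - ((k:ℝ)-1)^d)) * f ((k:ℝ)*δ) :=
            mul_le_mul_of_nonneg_right (schoen_key d hk1') (hfk k)
        _ = 5^d * (((k:ℝ)^d - ((k:ℝ)-1)^d) * f ((k:ℝ)*δ)) := by ring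
        _ ≤ 5^d * (((d:ℝ)/δ^d) * ∫ t in Set.Ioc (((k:ℝ)-1)*δ) ((k:ℝ)*δ), t^(d-1) * f t) :=
            mul_le_mul_of_nonneg_left (schoen_slice hpos hmono hd1 hδpos hint k hk1)
              (by positivity)
        _ = (5^d * ((d:ℝ)/δ^d)) * ∫ t in Set.Ioc (((k:ℝ)-1)*δ) ((k:ℝ)*δ), t^(d-1) * f t := by
            ring
    calc ∑ j ∈ G, f (dist (X i) (X j)) ≤ ∑ j ∈ G, f ((κ j:ℝ)*δ) := h1
      _ = ∑ k ∈ Finset.Icc 1 K, ∑ j ∈ G.filter (fun j => κ j = k), f ((κ j:ℝ)*δ) := h2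
      _ = ∑ k ∈ Finset.Icc 1 K, ((G.filter (fun j => κ j = k)).card : ℝ) * f ((k:ℝ)*δ) :=
          Finset.sum_congr rfl h3
      _ ≤ ∑ k ∈ Finset.Icc 1 K,
          (5^d * ((d:ℝ)/δ^d)) * ∫ t in Set.Ioc (((k:ℝ)-1)*δ) ((k:ℝ)*δ), t^(d-1) * f t :=
          Finset.sum_le_sum h4
      _ = (5^d * ((d:ℝ)/δ^d))
          * ∑ k ∈ Finset.Icc 1 K, ∫ t in Set.Ioc (((k:ℝ)-1)*δ) ((k:ℝ)*δ), t^(d-1) * f t := by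
          rw [Finset.mul_sum]
      _ = (5^d * ((d:ℝ)/δ^d)) * ∫ t in Set.Ioc 0 ((K:ℝ)*δ), t^(d-1) * f t := by
          rw [schoen_chain hδpos hint K]
      _ ≤ (5^d * ((d:ℝ)/δ^d)) * I := mul_le_mul_of_nonneg_left (hIK K) (by positivity)
      _ = (d:ℝ) * (5/δ)^d * I := by rw [div_pow]; ring
  -- assemble the matrix and row bounds
  set A : ℕ → ℕ → ℝ := fun i j => f (dist (X i) (X j)) with hA
  have hAsymm : ∀ i j, A i j = A j i := fun i j => by
    rw [hA]; simp only; rw [dist_comm]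
  have hAnn : ∀ i j, 0 ≤ A i j := fun i j => hpos _ dist_nonneg
  set M : ℝ := 1 + (d:ℝ)^2 * (5/δ)^d * I with hM
  have hrowM : ∀ (i : ℕ) (F : Finset ℕ), ∑ j ∈ F, A i j ≤ M := by
    intro i F
    have hsplit : ∑ j ∈ F, A i j ≤ A i i + ∑ j ∈ F.erase i, A i j := by
      by_cases hi : i ∈ F
      · exact le_of_eq (Finset.add_sum_erase F (A i) hi).symm
      · rw [Finset.erase_eq_of_notMem hi]
        have := hAnn i i
        linarith
    have hii : A i i = 1 := by rw [hA]; simp only; rw [dist_self]; exact hf0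
    have herase : ∑ j ∈ F.erase i, A i j ≤ (d:ℝ) * (5/δ)^d * I :=
      hoff i (F.erase i) (fun j hj => Finset.ne_of_mem_erase hj)
    have hdle : (d:ℝ) * (5/δ)^d * I ≤ (d:ℝ)^2 * (5/δ)^d * I := by
      have h1 : (1:ℝ) ≤ (d:ℝ) := by exact_mod_cast hd1
      have h2 : (0:ℝ) ≤ (5/δ)^d * I := by positivity
      have h3 : (0:ℝ) ≤ (((d:ℝ)-1)*(d:ℝ)) * ((5/δ)^d * I) :=
        mul_nonneg (mul_nonneg (by linarith) (by linarith)) h2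
      nlinarith
    rw [hM]
    calc ∑ j ∈ F, A i j ≤ A i i + ∑ j ∈ F.erase i, A i j := hsplit
      _ = 1 + ∑ j ∈ F.erase i, A i j := by rw [hii]
      _ ≤ 1 + (d:ℝ)^2 * (5/δ)^d * I := by linarith
  obtain ⟨T, hsa, hTapp, hTnorm⟩ := schoen_schur A hAsymm hAnn M hrowM
  refine ⟨T, hsa, ?_, hTnorm⟩
  intro i j
  rw [lp.inner_single_right]
  simp only [RCLike.inner_apply, conj_trivial, mul_one]
  rw [hTapp]
  rw [tsum_eq_single i ?_]
  · rw [lp.single_apply]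
    simp only [Pi.single_apply]
    norm_num
    exact hAsymm j i
  · intro k hk
    rw [lp.single_apply]
    simp [Pi.single_apply, hk]
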